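/- Let 𝓑 be a set partition of type C_n. Then (a) no set of pairwise crossing arcs of 𝓑 contains both an arc with both elements positive and an arc with both elements negative; (b) if M = {(o₁,c₁),…,(o_k,c_k)} is a set of pairwise crossing arcs of 𝓑, then {(−c₁,−o₁),…,(−c_k,−o_k)} is also a set of pairwise crossing arcs of 𝓑 of the same cardinality; and consequently (c) there exists a set of pairwise crossing arcs of maximal cardinality all of whose arcs have a positive opener. -/

import Mathlib

open scoped Classical
noncomputable section

/-! ### Set partitions of type A -/

/-- A set partition of `[n] = {1,…,n}`: pairwise disjoint nonempty blocks covering `[n]`. -/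
structure SetPartitionA (n : ℕ) where
  blocks : Finset (Finset ℕ)
  nonempty : ∀ B ∈ blocks, B.Nonempty
  disj : ∀ B ∈ blocks, ∀ B' ∈ blocks, B ≠ B' → Disjoint B B'
  cover : ∀ i : ℕ, (∃ B ∈ blocks, i ∈ B) ↔ i ∈ Finset.Icc 1 n

/-- Two arcs `(i,j)`, `(i',j')` cross if `i<i'<j<j'` (in either order of the two arcs). -/
def ACross (a b : ℕ × ℕ) : Prop :=
  (a.1 < b.1 ∧ b.1 < a.2 ∧ a.2 < b.2) ∨ (b.1 < a.1 ∧ a.1 < b.2 ∧ b.2 < a.2)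

/-- Two arcs `(i,j)`, `(i',j')` nest if `i<i'<j'<j` (in either order of the two arcs). -/
def ANest (a b : ℕ × ℕ) : Prop :=
  (a.1 < b.1 ∧ b.1 < b.2 ∧ b.2 < a.2) ∨ (b.1 < a.1 ∧ a.1 < a.2 ∧ a.2 < b.2)

namespace SetPartitionA

variable {n : ℕ}

/-- Openers: elements of `[n]` that are not the maximum of their block. -/
def openers (P : SetPartitionA n) : Finset ℕ :=
  (Finset.Icc 1 n).filter fun i => ∃ B ∈ P.blocks, i ∈ B ∧ ∃ j ∈ B, i < j

/-- Closers: elements of `[n]` that are not the minimum of their block. -/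
def closers (P : SetPartitionA n) : Finset ℕ :=
  (Finset.Icc 1 n).filter fun i => ∃ B ∈ P.blocks, i ∈ B ∧ ∃ j ∈ B, j < i

/-- `(i,j)` is an arc: `i < j` are in the same block with no block element in between. -/
def IsArc (P : SetPartitionA n) (i j : ℕ) : Prop :=
  i < j ∧ ∃ B ∈ P.blocks, i ∈ B ∧ j ∈ B ∧ ∀ k ∈ B, ¬(i < k ∧ k < j)

/-- The finite set of arcs of `P`. -/
def arcs (P : SetPartitionA n) : Finset (ℕ × ℕ) :=
  ((Finset.Icc 1 n) ×ˢ (Finset.Icc 1 n)).filter fun p => P.IsArc p.1 p.2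

/-- The number of crossings: pairs of arcs `(i,j)`, `(i',j')` with `i<i'<j<j'`. -/
def crossings (P : SetPartitionA n) : ℕ :=
  ((P.arcs ×ˢ P.arcs).filter fun q =>
    q.1.1 < q.2.1 ∧ q.2.1 < q.1.2 ∧ q.1.2 < q.2.2).card

/-- The number of nestings: pairs of arcs `(i,j)`, `(i',j')` with `i<i'<j'<j`. -/
def nestings (P : SetPartitionA n) : ℕ :=
  ((P.arcs ×ˢ P.arcs).filter fun q =>
    q.1.1 < q.2.1 ∧ q.2.1 < q.2.2 ∧ q.2.2 < q.1.2).card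

/-- The cardinality of a maximal crossing: largest set of mutually crossing arcs. -/
def maxCrossing (P : SetPartitionA n) : ℕ :=
  (P.arcs.powerset.filter fun S => ∀ a ∈ S, ∀ b ∈ S, a ≠ b → ACross a b).sup Finset.card

/-- The cardinality of a maximal nesting: largest set of mutually nesting arcs. -/
def maxNesting (P : SetPartitionA n) : ℕ :=
  (P.arcs.powerset.filter fun S => ∀ a ∈ S, ∀ b ∈ S, a ≠ b → ANest a b).sup Finset.card

end SetPartitionA

/-! ### Set partitions of classical types B/C/D on `[±n]` -/

/-- Position of `i ∈ [±n]` in the type `C` nesting order `1<⋯<n<-n<⋯<-1`. -/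
def nestOrd (n : ℕ) (i : ℤ) : ℤ := if 0 < i then i else 2 * n + 1 + i

/-- Position of `i ∈ [±n]` in the crossing order `1<⋯<n<-1<⋯<-n`. -/
def crossOrd (n : ℕ) (i : ℤ) : ℤ := if 0 < i then i else (n : ℤ) - i

/-- Position of `i ∈ [±n] ∪ {0}` in the type `B` nesting order `1<⋯<n<0<-n<⋯<-1`. -/
def nestOrdB (n : ℕ) (i : ℤ) : ℤ :=
  if 0 < i then i else if i = 0 then (n : ℤ) + 1 else 2 * n + 2 + i

/-- The negative `-B` of a block. -/
def negSet (B : Finset ℤ) : Finset ℤ := B.image fun x => -x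

/-- A set partition of type `B_n`/`C_n`: a set partition of `[±n]` with `B ∈ 𝓑 ↔ -B ∈ 𝓑`
and at most one block `B₀` with `B₀ = -B₀`. -/
structure SetPartitionC (n : ℕ) where
  blocks : Finset (Finset ℤ)
  nonempty : ∀ B ∈ blocks, B.Nonempty
  disj : ∀ B ∈ blocks, ∀ B' ∈ blocks, B ≠ B' → Disjoint B B'
  cover : ∀ i : ℤ, (∃ B ∈ blocks, i ∈ B) ↔ (i ≠ 0 ∧ |i| ≤ (n : ℤ))
  symm : ∀ B ∈ blocks, negSet B ∈ blocks
  zeroBlock : ∀ B ∈ blocks, ∀ B' ∈ blocks, negSet B = B → negSet B' = B' → B = B'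

/-- Endpoints of an arc, ordered by the crossing order. -/
def cpr (n : ℕ) (p : ℤ × ℤ) : ℤ × ℤ :=
  (min (crossOrd n p.1) (crossOrd n p.2), max (crossOrd n p.1) (crossOrd n p.2))

/-- `p` crosses `q` with `p` coming first in the crossing order. -/
def CrossRel (n : ℕ) (p q : ℤ × ℤ) : Prop :=
  (cpr n p).1 < (cpr n q).1 ∧ (cpr n q).1 < (cpr n p).2 ∧ (cpr n p).2 < (cpr n q).2

/-- The two arcs `p`, `q` cross in the crossing diagram. -/
def Crosses (n : ℕ) (p q : ℤ × ℤ) : Prop := CrossRel n p q ∨ CrossRel n q p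

/-- `p` nests over `q` in the nesting diagram (arcs written in nesting order). -/
def NestRel (n : ℕ) (p q : ℤ × ℤ) : Prop :=
  nestOrd n p.1 < nestOrd n q.1 ∧ nestOrd n q.2 < nestOrd n p.2

/-- The two arcs `p`, `q` nest in the nesting diagram. -/
def Nests (n : ℕ) (p q : ℤ × ℤ) : Prop := NestRel n p q ∨ NestRel n q p

/-- `p` nests over `q` in the type `B` nesting diagram. -/
def NestRelB (n : ℕ) (p q : ℤ × ℤ) : Prop :=
  nestOrdB n p.1 < nestOrdB n q.1 ∧ nestOrdB n q.2 < nestOrdB n p.2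

/-- The two arcs `p`, `q` nest in the type `B` nesting diagram. -/
def NestsB (n : ℕ) (p q : ℤ × ℤ) : Prop := NestRelB n p q ∨ NestRelB n q p

/-- Exceptional pairs for type `B` crossings: both arcs have positive opener and negative
closer, and at least one closer is smaller in absolute value than its opener. -/
def ExcCross (p q : ℤ × ℤ) : Prop :=
  0 < p.1 ∧ p.2 < 0 ∧ 0 < q.1 ∧ q.2 < 0 ∧ (|p.2| < |p.1| ∨ |q.2| < |q.1|)

/-- Exceptional pairs for type `B` nestings: both arcs have positive opener (or begin at `0`)
and negative closer (or end at `0`), and at least one closer is smaller in absolute value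
than its opener. -/
def ExcNest (p q : ℤ × ℤ) : Prop :=
  0 ≤ p.1 ∧ p.2 ≤ 0 ∧ 0 ≤ q.1 ∧ q.2 ≤ 0 ∧ (|p.2| < |p.1| ∨ |q.2| < |q.1|)

/-- A block augmented by `0` if it is the zero block. -/
def augB (B : Finset ℤ) : Finset ℤ := if negSet B = B then insert 0 B else B

/-- The arc `p` contains `n`. -/
def ContainsN (n : ℕ) (p : ℤ × ℤ) : Prop := p.1 = (n : ℤ) ∨ p.2 = (n : ℤ)

/-- The arc `p` contains `-n`. -/
def ContainsNegN (n : ℕ) (p : ℤ × ℤ) : Prop := p.1 = -(n : ℤ) ∨ p.2 = -(n : ℤ)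

namespace SetPartitionC

variable {n : ℕ}

/-- The ground set `[±n]` as a finset of integers. -/
def pmn (n : ℕ) : Finset ℤ := (Finset.Icc (-(n : ℤ)) (n : ℤ)).erase 0

/-- `(i,j)` is an arc: `i`, `j` are consecutive elements of a block in the nesting order. -/
def IsArc (P : SetPartitionC n) (i j : ℤ) : Prop :=
  nestOrd n i < nestOrd n j ∧ ∃ B ∈ P.blocks, i ∈ B ∧ j ∈ B ∧
    ∀ k ∈ B, ¬(nestOrd n i < nestOrd n k ∧ nestOrd n k < nestOrd n j)

/-- The finite set of arcs of `P` (written in nesting order). -/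
def arcs (P : SetPartitionC n) : Finset (ℤ × ℤ) :=
  (pmn n ×ˢ pmn n).filter fun p => P.IsArc p.1 p.2

/-- Openers: positive elements that are not maximal in their block w.r.t. the nesting order. -/
def openers (P : SetPartitionC n) : Finset ℤ :=
  (Finset.Icc 1 (n : ℤ)).filter fun i =>
    ∃ B ∈ P.blocks, i ∈ B ∧ ∃ j ∈ B, nestOrd n i < nestOrd n j

/-- Closers: positive elements that are not minimal in their block w.r.t. the nesting order. -/
def closers (P : SetPartitionC n) : Finset ℤ :=
  (Finset.Icc 1 (n : ℤ)).filter fun i =>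
    ∃ B ∈ P.blocks, i ∈ B ∧ ∃ j ∈ B, nestOrd n j < nestOrd n i

/-- The number of crossings of a type `C` set partition. -/
def crossings (P : SetPartitionC n) : ℕ :=
  ((P.arcs ×ˢ P.arcs).filter fun q => CrossRel n q.1 q.2).card

/-- The number of nestings of a type `C` set partition. -/
def nestings (P : SetPartitionC n) : ℕ :=
  ((P.arcs ×ˢ P.arcs).filter fun q => NestRel n q.1 q.2).card

/-- The number of crossings among pairs of arcs that both have positive opener. -/
def crossingsPos (P : SetPartitionC n) : ℕ :=
  (((P.arcs.filter fun p => 0 < p.1) ×ˢ (P.arcs.filter fun p => 0 < p.1)).filter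
    fun q => CrossRel n q.1 q.2).card

/-- The number of nestings among pairs of arcs that both have positive opener. -/
def nestingsPos (P : SetPartitionC n) : ℕ :=
  (((P.arcs.filter fun p => 0 < p.1) ×ˢ (P.arcs.filter fun p => 0 < p.1)).filter
    fun q => NestRel n q.1 q.2).card

/-- The cardinality of a maximal crossing. -/
def maxCrossing (P : SetPartitionC n) : ℕ :=
  (P.arcs.powerset.filter fun S => ∀ a ∈ S, ∀ b ∈ S, a ≠ b → Crosses n a b).sup Finset.card

/-- The cardinality of a maximal nesting. -/
def maxNesting (P : SetPartitionC n) : ℕ :=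
  (P.arcs.powerset.filter fun S => ∀ a ∈ S, ∀ b ∈ S, a ≠ b → Nests n a b).sup Finset.card

/-! ### Type B notions -/

/-- `(i,j)` is a type `B` nesting arc: consecutive elements of an augmented block in the
type `B` nesting order. -/
def IsArcB (P : SetPartitionC n) (i j : ℤ) : Prop :=
  nestOrdB n i < nestOrdB n j ∧ ∃ B ∈ P.blocks, i ∈ augB B ∧ j ∈ augB B ∧
    ∀ k ∈ augB B, ¬(nestOrdB n i < nestOrdB n k ∧ nestOrdB n k < nestOrdB n j)

/-- The finite set of type `B` nesting arcs of `P`. -/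
def arcsB (P : SetPartitionC n) : Finset (ℤ × ℤ) :=
  ((insert 0 (pmn n)) ×ˢ (insert 0 (pmn n))).filter fun p => P.IsArcB p.1 p.2

/-- The number of type `B` crossings. -/
def crossingsB (P : SetPartitionC n) : ℕ :=
  ((P.arcs ×ˢ P.arcs).filter fun q => CrossRel n q.1 q.2 ∧ ¬ExcCross q.1 q.2).card

/-- The number of type `B` nestings. -/
def nestingsB (P : SetPartitionC n) : ℕ :=
  ((P.arcsB ×ˢ P.arcsB).filter fun q => NestRelB n q.1 q.2 ∧ ¬ExcNest q.1 q.2).card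

/-- Openers in type `B`: positive elements not maximal in their block
w.r.t. the type `B` nesting order. -/
def openersB (P : SetPartitionC n) : Finset ℤ :=
  (Finset.Icc 1 (n : ℤ)).filter fun i =>
    ∃ B ∈ P.blocks, i ∈ B ∧ ∃ j ∈ B, nestOrdB n i < nestOrdB n j

/-- Closers in type `B`: positive elements not minimal in their block
w.r.t. the type `B` nesting order. -/
def closersB (P : SetPartitionC n) : Finset ℤ :=
  (Finset.Icc 1 (n : ℤ)).filter fun i =>
    ∃ B ∈ P.blocks, i ∈ B ∧ ∃ j ∈ B, nestOrdB n j < nestOrdB n i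

/-- The cardinality of a maximal type `B` crossing. -/
def maxCrossingB (P : SetPartitionC n) : ℕ :=
  (P.arcs.powerset.filter fun S =>
    ∀ a ∈ S, ∀ b ∈ S, a ≠ b → Crosses n a b ∧ ¬ExcCross a b).sup Finset.card

/-- The cardinality of a maximal type `B` nesting. -/
def maxNestingB (P : SetPartitionC n) : ℕ :=
  (P.arcsB.powerset.filter fun S =>
    ∀ a ∈ S, ∀ b ∈ S, a ≠ b → NestsB n a b ∧ ¬ExcNest a b).sup Finset.card

/-! ### Type D notions -/

/-- A type `C` set partition is of type `D` if the zero block, when present, is not a single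
pair `{i,-i}`. -/
def IsTypeD (P : SetPartitionC n) : Prop :=
  ∀ B ∈ P.blocks, negSet B = B → B.card ≠ 2

/-- The arcs starting in `{1,…,n-1}` and ending in the negative of an element of `{1,…,n-1}`. -/
def pnArcs (P : SetPartitionC n) : Finset (ℤ × ℤ) :=
  P.arcs.filter fun p => 0 < p.1 ∧ p.1 < (n : ℤ) ∧ -(n : ℤ) < p.2 ∧ p.2 < 0

/-- The index `l` of an arc `a = (i_l, -j_l)` in the list of `pnArcs` ordered by openers. -/
def dRank (P : SetPartitionC n) (a : ℤ × ℤ) : ℕ :=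
  (P.pnArcs.filter fun b => b.1 ≤ a.1).card

/-- The crossings allowed in a non-crossing set partition of type `D`. -/
def AllowedCrossD (P : SetPartitionC n) (p q : ℤ × ℤ) : Prop :=
  (ContainsN n p ∧ q ∈ P.pnArcs ∧ P.pnArcs.card < 2 * P.dRank q) ∨
  (ContainsN n q ∧ p ∈ P.pnArcs ∧ P.pnArcs.card < 2 * P.dRank p) ∨
  (ContainsNegN n p ∧ q ∈ P.pnArcs ∧ 2 * P.dRank q ≤ P.pnArcs.card) ∨
  (ContainsNegN n q ∧ p ∈ P.pnArcs ∧ 2 * P.dRank p ≤ P.pnArcs.card) ∨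
  (ContainsN n p ∧ ContainsNegN n q) ∨
  (ContainsN n q ∧ ContainsNegN n p)

/-- `P` is a non-crossing set partition of type `D_n`. -/
def NonCrossingD (P : SetPartitionC n) : Prop :=
  (∀ i : ℤ, 0 < i → P.IsArc i (-i) → i = n) ∧
  (∀ p ∈ P.arcs, ∀ q ∈ P.arcs, Crosses n p q → P.AllowedCrossD p q) ∧
  (∀ p ∈ P.arcs, ContainsN n p →
    ∀ q ∈ P.pnArcs, P.pnArcs.card < 2 * P.dRank q → Crosses n p q) ∧
  (∀ p ∈ P.arcs, ContainsNegN n p →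
    ∀ q ∈ P.pnArcs, 2 * P.dRank q ≤ P.pnArcs.card → Crosses n p q)

/-- The nestings (`p` over `q`) allowed in a non-nesting set partition of type `D`. -/
def AllowedNestD (P : SetPartitionC n) (p q : ℤ × ℤ) : Prop :=
  (0 < p.1 ∧ p.1 < q.1 ∧ q.1 < (n : ℤ) ∧ p.2 = -(n : ℤ) ∧ q.2 = (n : ℤ)) ∨
  (q.1 = (n : ℤ) ∧ q.2 = -(n : ℤ) ∧ 0 < p.1 ∧ p.1 < (n : ℤ) ∧ -(n : ℤ) < p.2 ∧ p.2 < 0 ∧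
    ∃ m : ℤ, 0 < m ∧ m < p.1 ∧ m < -p.2 ∧ P.IsArc m (n : ℤ))

/-- `P` is a non-nesting set partition of type `D_n`. -/
def NonNestingD (P : SetPartitionC n) : Prop :=
  (∀ i : ℤ, 0 < i → P.IsArc i (-i) → i = n) ∧
  (∀ p ∈ P.arcs, ∀ q ∈ P.arcs, NestRel n p q → P.AllowedNestD p q)

end SetPartitionC

/-! ### The staircase polyomino and chains in fillings -/

/-- The cells of the staircase polyomino `P_n`: `(c,r)` with `1 ≤ c ≤ n`, `c ≤ r ≤ 2n-1`. -/
def cellsP (n : ℕ) : Finset (ℕ × ℕ) :=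
  ((Finset.Icc 1 n) ×ˢ (Finset.Icc 1 (2 * n - 1))).filter fun p => p.1 ≤ p.2

/-- The length of the longest north-east chain among a set of (nonzero) cells:
columns strictly increase while rows strictly decrease. -/
def neLen (S : Finset (ℕ × ℕ)) : ℕ :=
  (S.powerset.filter fun T =>
    ∀ a ∈ T, ∀ b ∈ T, a ≠ b →
      (a.1 < b.1 ∧ b.2 < a.2) ∨ (b.1 < a.1 ∧ a.2 < b.2)).sup Finset.card

/-- The length of the longest south-east chain among a set of (nonzero) cells:
columns and rows strictly increase, and the surrounding rectangle lies in the polyomino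
(`a.1 ≤ b.2` for all cells `a`, `b` of the chain). -/
def seLen (S : Finset (ℕ × ℕ)) : ℕ :=
  (S.powerset.filter fun T =>
    (∀ a ∈ T, ∀ b ∈ T, a ≠ b →
      (a.1 < b.1 ∧ a.2 < b.2) ∨ (b.1 < a.1 ∧ b.2 < a.2)) ∧
    ∀ a ∈ T, ∀ b ∈ T, a.1 ≤ b.2).sup Finset.card

namespace SetPartitionC

variable {n : ℕ}

/-- The cells filled with `1` in the nesting filling of the staircase polyomino: rows are
labelled from top to bottom by `2,…,n,-n,…,-1`; the cell in column `i` and row labelled `j`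
is filled iff `(i,j)` is an arc with positive opener `i`. -/
def nestFill (P : SetPartitionC n) : Finset (ℕ × ℕ) :=
  (cellsP n).filter fun c => ∃ j : ℤ, P.IsArc (c.1 : ℤ) j ∧ nestOrd n j = (c.2 : ℤ) + 1

/-- The cells filled with `1` in the crossing filling of the staircase polyomino: rows are
labelled from top to bottom by `2,…,n,-1,…,-n`; the cell in column `i` and row labelled `j`
is filled iff `(i,j)` is an arc with positive opener `i`. -/
def crossFill (P : SetPartitionC n) : Finset (ℕ × ℕ) :=
  (cellsP n).filter fun c => ∃ j : ℤ, P.IsArc (c.1 : ℤ) j ∧ crossOrd n j = (c.2 : ℤ) + 1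

end SetPartitionC

/-! ### Triangulations of the symmetric 2n-gon and symmetric fans of Dyck paths -/

/-- `p` is a diagonal of the `2n`-gon with vertices labelled by `[±n]`, written with its two
(distinct) endpoints in crossing order. -/
def IsDiag (n : ℕ) (p : ℤ × ℤ) : Prop :=
  p.1 ≠ 0 ∧ p.2 ≠ 0 ∧ |p.1| ≤ (n : ℤ) ∧ |p.2| ≤ (n : ℤ) ∧ crossOrd n p.1 < crossOrd n p.2

/-- Normalize a pair so that its endpoints are in crossing order. -/
def normD (n : ℕ) (p : ℤ × ℤ) : ℤ × ℤ :=
  if crossOrd n p.1 < crossOrd n p.2 then p else (p.2, p.1)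

/-- `ω` contains `m` mutually crossing diagonals. -/
def HasMCross (n m : ℕ) (ω : Finset (ℤ × ℤ)) : Prop :=
  ∃ S ⊆ ω, S.card = m ∧ ∀ a ∈ S, ∀ b ∈ S, a ≠ b → Crosses n a b

/-- A type `C_n` `k`-triangulation: a symmetric set of diagonals with no `(k+1)`-crossing,
maximal with this property. -/
def IsTriangC (n k : ℕ) (ω : Finset (ℤ × ℤ)) : Prop :=
  (∀ p ∈ ω, IsDiag n p) ∧
  (∀ p ∈ ω, normD n (-p.1, -p.2) ∈ ω) ∧
  ¬HasMCross n (k + 1) ω ∧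
  ∀ d : ℤ × ℤ, IsDiag n d → d ∉ ω → HasMCross n (k + 1) (insert d ω)

/-- A Dyck path in the staircase polyomino starting at the top cell `(i,i)` of column `i`,
proceeding by unit south or west steps inside `P_n`, and ending on the main diagonal
`r = 2n - c`. -/
def IsDyckPath (n i : ℕ) (l : List (ℕ × ℕ)) : Prop :=
  l ≠ [] ∧ l.head? = some (i, i) ∧ (∀ c ∈ l, c ∈ cellsP n) ∧
  l.Chain' (fun a b => (b.1 = a.1 ∧ b.2 = a.2 + 1) ∨ (b.1 + 1 = a.1 ∧ b.2 = a.2)) ∧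
  ∀ c : ℕ × ℕ, l.getLast? = some c → c.2 = 2 * n - c.1

/-- A symmetric fan of `k` non-intersecting Dyck paths: the `i`-th path starts at cell
`(i,i)` and the paths are pairwise cell-disjoint. -/
def IsSymFan (n k : ℕ) (f : Fin k → List (ℕ × ℕ)) : Prop :=
  (∀ i : Fin k, IsDyckPath n ((i : ℕ) + 1) (f i)) ∧
  ∀ i j : Fin k, i ≠ j → ∀ c ∈ f i, c ∉ f j


section Aux
variable {n : ℕ} {P : SetPartitionC n}

lemma arc_facts {p : ℤ × ℤ} (h : p ∈ P.arcs) :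
    p.1 ≠ 0 ∧ p.2 ≠ 0 ∧ -(n:ℤ) ≤ p.1 ∧ p.1 ≤ n ∧ -(n:ℤ) ≤ p.2 ∧ p.2 ≤ n ∧
      nestOrd n p.1 < nestOrd n p.2 := by
  simp only [SetPartitionC.arcs, SetPartitionC.pmn, Finset.mem_filter, Finset.mem_product,
    Finset.mem_erase, Finset.mem_Icc] at h
  exact ⟨h.1.1.1, h.1.2.1, h.1.1.2.1, h.1.1.2.2, h.1.2.2.1, h.1.2.2.2, h.2.1⟩

lemma arc_neg_of_neg {p : ℤ × ℤ} (h : p ∈ P.arcs) (h1 : p.1 < 0) : p.2 < 0 := by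
  obtain ⟨a, b, c, d, e, f, g⟩ := arc_facts h
  simp only [nestOrd] at g
  split_ifs at g <;> omega

lemma no_pos_neg_cross {p q : ℤ × ℤ} (hp : p ∈ P.arcs) (hq : q ∈ P.arcs)
    (hp1 : 0 < p.1) (hp2 : 0 < p.2) (hq1 : q.1 < 0) (hq2 : q.2 < 0) :
    ¬ Crosses n p q := by
  obtain ⟨_, _, _, _, _, _, _⟩ := arc_facts hp
  obtain ⟨_, _, _, _, _, _, _⟩ := arc_facts hq
  simp only [Crosses, CrossRel, cpr, crossOrd] at *
  split_ifs <;> omega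

end Aux

section Aux2
variable {n : ℕ} {P : SetPartitionC n}

lemma nestOrd_neg {i : ℤ} (h0 : i ≠ 0) (h1 : -(n:ℤ) ≤ i) (h2 : i ≤ n) :
    nestOrd n (-i) = 2*n + 1 - nestOrd n i := by
  simp only [nestOrd]; split_ifs <;> omega

lemma mem_facts {B : Finset ℤ} (hB : B ∈ P.blocks) {m : ℤ} (hm : m ∈ B) :
    m ≠ 0 ∧ -(n:ℤ) ≤ m ∧ m ≤ n := by
  have := (P.cover m).mp ⟨B, hB, hm⟩
  rw [abs_le] at this
  exact ⟨this.1, this.2.1, this.2.2⟩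

lemma arc_neg {p : ℤ × ℤ} (h : p ∈ P.arcs) : (-p.2, -p.1) ∈ P.arcs := by
  obtain ⟨h10, h20, h1l, h1u, h2l, h2u, hlt⟩ := arc_facts h
  simp only [SetPartitionC.arcs, Finset.mem_filter] at h ⊢
  simp only [SetPartitionC.pmn, Finset.mem_product,
    Finset.mem_erase, Finset.mem_Icc, SetPartitionC.IsArc] at h ⊢
  obtain ⟨-, -, B, hB, hp1, hp2, hcons⟩ := h
  refine ⟨⟨⟨by omega, by omega, by omega⟩, ⟨by omega, by omega, by omega⟩⟩, ?_, negSet B,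
    P.symm B hB, ?_, ?_, ?_⟩
  · rw [nestOrd_neg h20 h2l h2u, nestOrd_neg h10 h1l h1u]; omega
  · simp only [negSet, Finset.mem_image]; exact ⟨p.2, hp2, rfl⟩
  · simp only [negSet, Finset.mem_image]; exact ⟨p.1, hp1, rfl⟩
  · intro k hk
    simp only [negSet, Finset.mem_image] at hk
    obtain ⟨m, hm, rfl⟩ := hk
    obtain ⟨hm0, hml, hmu⟩ := mem_facts hB hm
    rw [nestOrd_neg h20 h2l h2u, nestOrd_neg h10 h1l h1u, nestOrd_neg hm0 hml hmu]
    have := hcons m hm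
    omega

end Aux2

section Aux3
variable {n : ℕ} {P : SetPartitionC n}

lemma cpr_cases {p : ℤ × ℤ} (hp : p ∈ P.arcs) :
    (0 < p.1 ∧ 0 < p.2 ∧ cpr n p = (p.1, p.2) ∧
      cpr n (-p.2, -p.1) = ((n:ℤ) + p.1, (n:ℤ) + p.2)) ∨
    (0 < p.1 ∧ p.2 < 0 ∧ cpr n p = (p.1, (n:ℤ) - p.2) ∧
      cpr n (-p.2, -p.1) = (-p.2, (n:ℤ) + p.1)) ∨
    (p.1 < 0 ∧ p.2 < 0 ∧ cpr n p = ((n:ℤ) - p.2, (n:ℤ) - p.1) ∧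
      cpr n (-p.2, -p.1) = (-p.2, -p.1)) := by
  obtain ⟨a0, b0, al, au, bl, bu, hlt⟩ := arc_facts hp
  simp only [nestOrd] at hlt
  simp only [cpr, crossOrd, Prod.mk.injEq]
  split_ifs at hlt ⊢ <;> omega

lemma crosses_neg {p q : ℤ × ℤ} (hp : p ∈ P.arcs) (hq : q ∈ P.arcs)
    (h : Crosses n p q) : Crosses n (-p.2, -p.1) (-q.2, -q.1) := by
  obtain ⟨a0, b0, al, au, bl, bu, -⟩ := arc_facts hp
  obtain ⟨c0, d0, cl, cu, dl, du, -⟩ := arc_facts hq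
  simp only [Crosses, CrossRel] at h ⊢
  rcases cpr_cases hp with ⟨s1, s2, e1, f1⟩ | ⟨s1, s2, e1, f1⟩ | ⟨s1, s2, e1, f1⟩ <;>
  rcases cpr_cases hq with ⟨t1, t2, e2, f2⟩ | ⟨t1, t2, e2, f2⟩ | ⟨t1, t2, e2, f2⟩ <;>
  · simp only [e1, f1, e2, f2] at h ⊢
    omega

end Aux3

section Aux4
variable {n : ℕ} {P : SetPartitionC n}

lemma part_b (M : Finset (ℤ × ℤ)) (hM : M ⊆ P.arcs)
    (hcross : ∀ a ∈ M, ∀ b ∈ M, a ≠ b → Crosses n a b) :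
    M.image (fun p => (-p.2, -p.1)) ⊆ P.arcs ∧
    (∀ a ∈ M.image (fun p => (-p.2, -p.1)), ∀ b ∈ M.image (fun p => (-p.2, -p.1)),
      a ≠ b → Crosses n a b) ∧
    (M.image (fun p => (-p.2, -p.1))).card = M.card := by
  have hinj : Function.Injective (fun p : ℤ × ℤ => (-p.2, -p.1)) := by
    intro a b hab
    simp only [Prod.mk.injEq, neg_inj] at hab
    exact Prod.ext hab.2 hab.1
  refine ⟨?_, ?_, Finset.card_image_of_injective _ hinj⟩
  · intro a ha
    simp only [Finset.mem_image] at ha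
    obtain ⟨p, hp, rfl⟩ := ha
    exact arc_neg (hM hp)
  · intro a ha b hb hab
    simp only [Finset.mem_image] at ha hb
    obtain ⟨p, hp, rfl⟩ := ha
    obtain ⟨q, hq, rfl⟩ := hb
    have hpq : p ≠ q := fun h => hab (by rw [h])
    exact crosses_neg (hM hp) (hM hq) (hcross p hp q hq hpq)

lemma exists_max (P : SetPartitionC n) :
    ∃ M, M ⊆ P.arcs ∧ (∀ a ∈ M, ∀ b ∈ M, a ≠ b → Crosses n a b) ∧
      M.card = P.maxCrossing := by
  have hne : (P.arcs.powerset.filter fun S =>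
      ∀ a ∈ S, ∀ b ∈ S, a ≠ b → Crosses n a b).Nonempty :=
    ⟨∅, by simp⟩
  obtain ⟨M, hM, hcard⟩ := Finset.exists_mem_eq_sup _ hne Finset.card
  simp only [Finset.mem_filter, Finset.mem_powerset] at hM
  exact ⟨M, hM.1, hM.2, hcard.symm⟩

end Aux4


theorem stmt15 (n : ℕ) (P : SetPartitionC n) :
    (∀ S : Finset (ℤ × ℤ), S ⊆ P.arcs →
      (∀ a ∈ S, ∀ b ∈ S, a ≠ b → Crosses n a b) →
      ¬((∃ p ∈ S, 0 < p.1 ∧ 0 < p.2) ∧ (∃ q ∈ S, q.1 < 0 ∧ q.2 < 0))) ∧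
    (∀ M : Finset (ℤ × ℤ), M ⊆ P.arcs →
      (∀ a ∈ M, ∀ b ∈ M, a ≠ b → Crosses n a b) →
      (M.image (fun p => (-p.2, -p.1)) ⊆ P.arcs ∧
       (∀ a ∈ M.image (fun p => (-p.2, -p.1)), ∀ b ∈ M.image (fun p => (-p.2, -p.1)),
          a ≠ b → Crosses n a b) ∧
       (M.image (fun p => (-p.2, -p.1))).card = M.card)) ∧
    (∃ M : Finset (ℤ × ℤ), M ⊆ P.arcs ∧
      (∀ a ∈ M, ∀ b ∈ M, a ≠ b → Crosses n a b) ∧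
      M.card = P.maxCrossing ∧ ∀ p ∈ M, 0 < p.1) := by
  refine ⟨?_, fun M hM hc => part_b M hM hc, ?_⟩
  · rintro S hS hcross ⟨⟨p, hpS, hp1, hp2⟩, ⟨q, hqS, hq1, hq2⟩⟩
    have hne : p ≠ q := fun h => by rw [h] at hp1; omega
    exact no_pos_neg_cross (hS hpS) (hS hqS) hp1 hp2 hq1 hq2 (hcross p hpS q hqS hne)
  · obtain ⟨M, hMsub, hMcross, hMcard⟩ := exists_max P
    by_cases h : ∃ q ∈ M, q.1 < 0
    · obtain ⟨q, hqM, hq1⟩ := h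
      have hq2 := arc_neg_of_neg (hMsub hqM) hq1
      obtain ⟨hsub', hcross', hcard'⟩ := part_b M hMsub hMcross
      refine ⟨M.image (fun p => (-p.2, -p.1)), hsub', hcross', by rw [hcard', hMcard], ?_⟩
      intro r hr
      simp only [Finset.mem_image] at hr
      obtain ⟨p, hpM, rfl⟩ := hr
      have hp2 : p.2 < 0 := by
        obtain ⟨hp10, hp20, -, -, -, -, -⟩ := arc_facts (hMsub hpM)
        rcases lt_or_gt_of_ne hp10 with h1 | h1
        · exact arc_neg_of_neg (hMsub hpM) h1
        rcases lt_or_gt_of_ne hp20 with h2 | h2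
        · exact h2
        have hne : p ≠ q := fun h => by rw [h] at h1; omega
        exact absurd (hMcross p hpM q hqM hne)
          (no_pos_neg_cross (hMsub hpM) (hMsub hqM) h1 h2 hq1 hq2)
      simpa using hp2
    · push_neg at h
      refine ⟨M, hMsub, hMcross, hMcard, fun p hp => ?_⟩
      have := (arc_facts (hMsub hp)).1
      have := h p hp
      omega
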